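/- (Theorem Ã, algebraic form.) Let a ∈ ℝ[z₁,…,z_d] satisfy a(1,…,1) = 2^d and a(ε) = 0 for every ε ∈ Z'. Then there exist polynomials c_Θ ∈ ℝ[z₁,…,z_d], indexed by the finitely many d×d integer matrices Θ whose columns are 0-1 vectors with exactly one or two entries equal to 1 and with det Θ = ±1, such that a = Σ_Θ c_Θ · 2^d · q̃_Θ and Σ_Θ c_Θ(1,…,1) = 1. -/

import Mathlib

open MvPolynomial

/-- For a `d×d` integer matrix `Θ` each of whose columns is a 0-1 vector with exactly one
or two entries equal to 1, the modified polynomial `q̃_Θ(z) = ∏_{columns θ} r̃_θ(z)`, where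
`r̃_θ(z) = (1+z_k)/2` if `θ = e_k` and `r̃_θ(z) = (z_j+z_k)/2` if `θ = e_j + e_k`, `j ≠ k`. -/
noncomputable def qtilde {d : ℕ} (Θ : Matrix (Fin d) (Fin d) ℤ) : MvPolynomial (Fin d) ℝ :=
  ∏ c : Fin d,
    (C (1 / 2 : ℝ) *
      ((if (∑ i, Θ i c) = 1 then 1 else 0) + ∑ i : Fin d, C ((Θ i c : ℝ)) * X i))

namespace Stmt9

variable {d : ℕ}

def goodPred (Θ : Matrix (Fin d) (Fin d) ℤ) : Prop :=
  (∀ i j, Θ i j = 0 ∨ Θ i j = 1) ∧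
  (∀ j, (∑ i, Θ i j) = 1 ∨ (∑ i, Θ i j) = 2) ∧
  (Θ.det = 1 ∨ Θ.det = -1)

open Classical in
noncomputable def Sfin (d : ℕ) : Finset (Matrix (Fin d) (Fin d) ℤ) :=
  ((Finset.univ : Finset (Fin d → Fin d → Bool)).filter
      (fun b => goodPred (Matrix.of fun i j => if b i j then 1 else 0))).image
    (fun b => Matrix.of fun i j => if b i j then 1 else 0)

lemma mem_Sfin {Θ : Matrix (Fin d) (Fin d) ℤ} : Θ ∈ Sfin d ↔ goodPred Θ := by
  classical
  constructor
  · intro h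
    simp only [Sfin, Finset.mem_image, Finset.mem_filter] at h
    obtain ⟨b, ⟨-, hb⟩, rfl⟩ := h
    exact hb
  · intro h
    simp only [Sfin, Finset.mem_image, Finset.mem_filter]
    have key : (Matrix.of fun i j => if decide (Θ i j = 1) = true then (1:ℤ) else 0) = Θ := by
      ext i j
      rcases h.1 i j with h0 | h1
      · simp [Matrix.of_apply, h0]
      · simp [Matrix.of_apply, h1]
    exact ⟨fun i j => decide (Θ i j = 1), ⟨Finset.mem_univ _, by rw [key]; exact h⟩, key⟩

noncomputable def gfac (Θ : Matrix (Fin d) (Fin d) ℤ) (c : Fin d) : MvPolynomial (Fin d) ℝ :=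
  (if (∑ i, Θ i c) = 1 then 1 else 0) + ∑ i : Fin d, C ((Θ i c : ℝ)) * X i

lemma two_pow_mul_qtilde (Θ : Matrix (Fin d) (Fin d) ℤ) :
    (2 : MvPolynomial (Fin d) ℝ) ^ d * qtilde Θ = ∏ c : Fin d, gfac Θ c := by
  have h2 : (2 : MvPolynomial (Fin d) ℝ) = C 2 := by simp [map_ofNat]
  rw [qtilde, Finset.prod_mul_distrib, Finset.prod_const, h2, ← map_pow, ← mul_assoc]
  have : (C ((2:ℝ)^d) * C (1/2 : ℝ) ^ (Finset.univ : Finset (Fin d)).card : MvPolynomial (Fin d) ℝ) = 1 := by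
    rw [← map_pow, ← map_mul, Finset.card_univ, Fintype.card_fin, ← mul_pow]
    norm_num
  rw [this, one_mul]
  rfl

/-- representability in the required form -/
def Rep (d : ℕ) (a : MvPolynomial (Fin d) ℝ) : Prop :=
  ∃ c : Matrix (Fin d) (Fin d) ℤ → MvPolynomial (Fin d) ℝ,
    a = ∑ Θ ∈ Sfin d, c Θ * (2 : MvPolynomial (Fin d) ℝ) ^ d * qtilde Θ

lemma rep_zero : Rep d 0 := ⟨0, by simp⟩

lemma rep_add {a b : MvPolynomial (Fin d) ℝ} (ha : Rep d a) (hb : Rep d b) :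
    Rep d (a + b) := by
  obtain ⟨ca, rfl⟩ := ha; obtain ⟨cb, rfl⟩ := hb
  refine ⟨ca + cb, ?_⟩
  rw [← Finset.sum_add_distrib]
  refine Finset.sum_congr rfl fun Θ _ => ?_
  simp only [Pi.add_apply]
  ring

lemma rep_mul (g : MvPolynomial (Fin d) ℝ) {a : MvPolynomial (Fin d) ℝ} (ha : Rep d a) :
    Rep d (g * a) := by
  obtain ⟨c, rfl⟩ := ha
  exact ⟨fun Θ => g * c Θ, by rw [Finset.mul_sum]; exact Finset.sum_congr rfl fun Θ _ => by ring⟩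

lemma rep_gen {Θ₀ : Matrix (Fin d) (Fin d) ℤ} (h : Θ₀ ∈ Sfin d) :
    Rep d ((2 : MvPolynomial (Fin d) ℝ) ^ d * qtilde Θ₀) := by
  classical
  refine ⟨fun Θ => if Θ = Θ₀ then 1 else 0, ?_⟩
  rw [Finset.sum_congr rfl (fun Θ _ => ?_), Finset.sum_ite_eq' (Sfin d) Θ₀
    (fun Θ => (2 : MvPolynomial (Fin d) ℝ) ^ d * qtilde Θ), if_pos h]
  by_cases hΘ : Θ = Θ₀ <;> simp [hΘ]

lemma rep_prod_gen {Θ₀ : Matrix (Fin d) (Fin d) ℤ} (h : Θ₀ ∈ Sfin d) :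
    Rep d (∏ c : Fin d, gfac Θ₀ c) := by
  rw [← two_pow_mul_qtilde]; exact rep_gen h

def colId (c : Fin d) : Fin d → ℤ := fun i => if i = c then 1 else 0

def GoodOn (V : Finset (Fin d)) (Θ : Matrix (Fin d) (Fin d) ℤ) : Prop :=
  goodPred Θ ∧ (∀ c, c ∉ V → ∀ i, Θ i c = colId c i) ∧
    (∀ c ∈ V, ∀ i, i ∉ V → Θ i c = 0)

lemma sum_colId (c : Fin d) : (∑ i, colId c i) = 1 := by
  simp [colId]

lemma gfac_congr {Θ Θ' : Matrix (Fin d) (Fin d) ℤ} {c : Fin d}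
    (h : ∀ i, Θ i c = Θ' i c) : gfac Θ c = gfac Θ' c := by
  unfold gfac
  have h1 : (∑ i, Θ i c) = ∑ i, Θ' i c := Finset.sum_congr rfl (fun i _ => h i)
  have h2 : (∑ i : Fin d, C ((Θ i c : ℝ)) * X i) = ∑ i : Fin d, C ((Θ' i c : ℝ)) * X i :=
    Finset.sum_congr rfl (fun i _ => by rw [h i])
  rw [h1, h2]

lemma gfac_of_colId {Θ : Matrix (Fin d) (Fin d) ℤ} {c : Fin d}
    (h : ∀ i, Θ i c = colId c i) : gfac Θ c = 1 + X c := by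
  unfold gfac
  have h1 : (∑ i, Θ i c) = 1 := by
    rw [Finset.sum_congr rfl (fun i _ => h i)]; exact sum_colId c
  have h2 : (∑ i : Fin d, C ((Θ i c : ℝ)) * X i) = X c := by
    rw [Finset.sum_congr rfl (fun i (_ : i ∈ Finset.univ) => show C ((Θ i c : ℝ)) * X i
        = if i = c then X i else 0 by
      rw [h i]; unfold colId
      by_cases hic : i = c
      · simp [hic]
      · simp [hic])]
    simp
  rw [h1, h2, if_pos rfl]

lemma gfac_of_pair {Θ : Matrix (Fin d) (Fin d) ℤ} {c a b : Fin d} (hab : a ≠ b)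
    (h : ∀ i, Θ i c = colId a i + colId b i) : gfac Θ c = X a + X b := by
  unfold gfac
  have hs : (∑ i, Θ i c) = 2 := by
    rw [Finset.sum_congr rfl (fun i _ => h i), Finset.sum_add_distrib, sum_colId, sum_colId]
    norm_num
  have h2 : (∑ i : Fin d, C ((Θ i c : ℝ)) * X i) = X a + X b := by
    rw [Finset.sum_congr rfl (fun i (_ : i ∈ Finset.univ) => show C ((Θ i c : ℝ)) * X i
        = (if i = a then X i else 0) + (if i = b then X i else 0) by
      rw [h i]; unfold colId
      by_cases hia : i = a
      · have hib : ¬ i = b := by rw [hia]; exact hab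
        simp [hia, hib, hab, Ne.symm hab]
      · by_cases hib : i = b
        · simp [hia, hib, hab, Ne.symm hab]
        · simp [hia, hib])]
    rw [Finset.sum_add_distrib]
    simp
  rw [hs, h2]
  norm_num

lemma goodOn_insert {V : Finset (Fin d)} {Θ : Matrix (Fin d) (Fin d) ℤ} {t : Fin d}
    (h : GoodOn V Θ) : GoodOn (insert t V) Θ := by
  obtain ⟨hg, hout, hsupp⟩ := h
  refine ⟨hg, ?_, ?_⟩
  · intro c hc i
    exact hout c (fun hcv => hc (Finset.mem_insert_of_mem hcv)) i
  · intro c hc i hi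
    have hiV : i ∉ V := fun hh => hi (Finset.mem_insert_of_mem hh)
    have hit : i ≠ t := fun hh => hi (hh ▸ Finset.mem_insert_self t V)
    rcases Finset.mem_insert.1 hc with rfl | hcV
    · by_cases hcV2 : c ∈ V
      · exact hsupp c hcV2 i hiV
      · rw [hout c hcV2 i]; unfold colId
        rw [if_neg hit]
    · exact hsupp c hcV i hiV

lemma det_update {V : Finset (Fin d)} {Θ : Matrix (Fin d) (Fin d) ℤ} (h : GoodOn V Θ)
    {c₀ p : Fin d} (hc₀ : c₀ ∉ V) (hp : p ∈ V) :
    (Θ.updateCol c₀ (colId c₀ + colId p)).det = Θ.det := by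
  rw [Matrix.det_updateCol_add]
  have hpc : p ≠ c₀ := fun hh => hc₀ (hh ▸ hp)
  have h1 : Θ.updateCol c₀ (colId c₀) = Θ := by
    ext i c
    by_cases hc : c = c₀
    · rw [hc, Matrix.updateCol_self, h.2.1 c₀ hc₀ i]
    · rw [Matrix.updateCol_ne hc]
  have h2 : (Θ.updateCol c₀ (colId p)).det = 0 := by
    apply Matrix.det_eq_zero_of_row_eq_zero c₀
    intro c
    by_cases hc : c = c₀
    · subst hc; rw [Matrix.updateCol_self]; unfold colId
      rw [if_neg (fun hh => hpc hh.symm)]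
    · rw [Matrix.updateCol_ne hc]
      by_cases hcV : c ∈ V
      · exact h.2.2 c hcV c₀ hc₀
      · rw [h.2.1 c hcV c₀]; unfold colId
        rw [if_neg (Ne.symm hc)]
  rw [h1, h2, add_zero]

lemma goodOn_update {V : Finset (Fin d)} {Θ : Matrix (Fin d) (Fin d) ℤ} (h : GoodOn V Θ)
    {c₀ p : Fin d} (hc₀ : c₀ ∉ V) (hp : p ∈ V) :
    GoodOn (insert c₀ V) (Θ.updateCol c₀ (colId c₀ + colId p)) := by
  have hpc : p ≠ c₀ := fun hh => hc₀ (hh ▸ hp)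
  have hsum0 : (Finset.univ : Finset (Fin d)).sum (colId c₀ + colId p) = 2 := by
    have : (Finset.univ : Finset (Fin d)).sum (colId c₀ + colId p)
        = ∑ i, (colId c₀ i + colId p i) := rfl
    rw [this, Finset.sum_add_distrib, sum_colId, sum_colId]
    norm_num
  obtain ⟨⟨h01, hsum, hdet⟩, hout, hsupp⟩ := h
  refine ⟨⟨?_, ?_, ?_⟩, ?_, ?_⟩
  · intro i c
    by_cases hc : c = c₀
    · subst hc
      rw [Matrix.updateCol_self]
      show (colId c i + colId p i = 0) ∨ (colId c i + colId p i = 1)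
      unfold colId
      by_cases hi0 : i = c
      · have hip : ¬ i = p := fun hh => hpc (by rw [← hh, hi0])
        simp [hi0, hip, hpc, Ne.symm hpc]
      · by_cases hip : i = p
        · simp [hi0, hip, hpc, Ne.symm hpc]
        · simp [hi0, hip]
    · rw [Matrix.updateCol_ne hc]; exact h01 i c
  · intro c
    by_cases hc : c = c₀
    · subst hc
      right
      rw [Finset.sum_congr rfl (fun i (_ : i ∈ Finset.univ) => by
        rw [Matrix.updateCol_self])]
      exact hsum0
    · rw [Finset.sum_congr rfl (fun i (_ : i ∈ Finset.univ) => by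
        rw [Matrix.updateCol_ne hc])]
      exact hsum c
  · rw [det_update ⟨⟨h01, hsum, hdet⟩, hout, hsupp⟩ hc₀ hp]; exact hdet
  · intro c hc i
    have hcc : c ≠ c₀ := fun hh => hc (hh ▸ Finset.mem_insert_self c₀ V)
    rw [Matrix.updateCol_ne hcc]
    exact hout c (fun hcv => hc (Finset.mem_insert_of_mem hcv)) i
  · intro c hc i hi
    have hi0 : i ≠ c₀ := fun hh => hi (hh ▸ Finset.mem_insert_self c₀ V)
    have hiV : i ∉ V := fun hh => hi (Finset.mem_insert_of_mem hh)
    have hip : i ≠ p := fun hh => hiV (hh ▸ hp)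
    rcases Finset.mem_insert.1 hc with rfl | hcV
    · rw [Matrix.updateCol_self]
      show colId c i + colId p i = 0
      unfold colId
      rw [if_neg hi0, if_neg hip]
      norm_num
    · have hcc : c ≠ c₀ := fun hh => hc₀ (hh ▸ hcV)
      rw [Matrix.updateCol_ne hcc]
      exact hsupp c hcV i hiV

noncomputable def msum (V : Finset (Fin d)) (L : List (ℝ × Matrix (Fin d) (Fin d) ℤ)) :
    MvPolynomial (Fin d) ℝ :=
  (L.map (fun x => C x.1 * ∏ c ∈ V, gfac x.2 c)).sum

def Cert (V : Finset (Fin d)) (j : Fin d) : Prop :=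
  ∃ L : List (ℝ × Matrix (Fin d) (Fin d) ℤ), (∀ x ∈ L, GoodOn V x.2) ∧
    msum V L = C ((2:ℝ) ^ (V.card - 2)) * (X j ^ 2 - 1)

lemma msum_append (V : Finset (Fin d)) (L1 L2 : List (ℝ × Matrix (Fin d) (Fin d) ℤ)) :
    msum V (L1 ++ L2) = msum V L1 + msum V L2 := by
  simp [msum]

lemma msum_map_mul {V V' : Finset (Fin d)}
    (f : ℝ × Matrix (Fin d) (Fin d) ℤ → ℝ × Matrix (Fin d) (Fin d) ℤ)
    (ψ : MvPolynomial (Fin d) ℝ) (L : List (ℝ × Matrix (Fin d) (Fin d) ℤ))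
    (h : ∀ x ∈ L, C (f x).1 * ∏ c ∈ V', gfac (f x).2 c = ψ * (C x.1 * ∏ c ∈ V, gfac x.2 c)) :
    msum V' (L.map f) = ψ * msum V L := by
  induction L with
  | nil => simp [msum]
  | cons a L ih =>
    have ha := h a (List.mem_cons_self)
    have ih' := ih (fun x hx => h x (List.mem_cons_of_mem a hx))
    simp only [msum, List.map_cons, List.sum_cons] at *
    rw [ha, ih', mul_add]

lemma msum_grow {V V' : Finset (Fin d)} {t : Fin d} (hV' : V' = insert t V) (ht : t ∉ V)
    (L : List (ℝ × Matrix (Fin d) (Fin d) ℤ)) (hL : ∀ x ∈ L, GoodOn V x.2) :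
    msum V' L = (1 + X t) * msum V L := by
  have := msum_map_mul (V := V) (V' := V') id ((1 + X t)) L (fun x hx => by
    have hfac : gfac x.2 t = 1 + X t := gfac_of_colId ((hL x hx).2.1 t ht)
    simp only [id_eq]
    rw [hV', Finset.prod_insert ht, hfac]
    ring)
  rwa [List.map_id] at this

lemma goodOn_one (V : Finset (Fin d)) : GoodOn V (1 : Matrix (Fin d) (Fin d) ℤ) := by
  have hone : ∀ i c : Fin d, (1 : Matrix (Fin d) (Fin d) ℤ) i c = colId c i := by
    intro i c; rw [Matrix.one_apply]; rfl
  refine ⟨⟨?_, ?_, ?_⟩, ?_, ?_⟩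
  · intro i c
    rw [hone i c]; unfold colId
    by_cases hic : i = c
    · simp [hic]
    · simp [hic]
  · intro c
    left
    rw [Finset.sum_congr rfl (fun i (_ : i ∈ Finset.univ) => hone i c)]
    exact sum_colId c
  · left; exact Matrix.det_one
  · intro c _ i; exact hone i c
  · intro c hc i hi
    rw [hone i c]; unfold colId
    rw [if_neg (fun hh => hi (by rw [hh]; exact hc))]

lemma cert_base {j u : Fin d} (hju : j ≠ u) : Cert {j, u} j := by
  classical
  set Θa : Matrix (Fin d) (Fin d) ℤ :=
    (1 : Matrix (Fin d) (Fin d) ℤ).updateCol u (colId u + colId j) with hΘa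
  have huj : u ∉ ({j} : Finset (Fin d)) := by
    simp [Ne.symm hju]
  have hpair : ({j, u} : Finset (Fin d)) = insert u {j} := Finset.pair_comm j u
  have hGa : GoodOn {j, u} Θa := by
    rw [hpair]
    exact goodOn_update (goodOn_one {j}) huj (Finset.mem_singleton_self j)
  have hGb : GoodOn {j, u} (1 : Matrix (Fin d) (Fin d) ℤ) := goodOn_one _
  refine ⟨[(1, Θa), (-1, 1)], ?_, ?_⟩
  · intro x hx
    rcases List.mem_cons.1 hx with rfl | hx
    · exact hGa
    · rcases List.mem_cons.1 hx with rfl | hx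
      · exact hGb
      · exact absurd hx List.not_mem_nil
  · have hprodA : ∏ c ∈ ({j, u} : Finset (Fin d)), gfac Θa c = (1 + X j) * (X u + X j) := by
      rw [Finset.prod_pair hju]
      congr 1
      · refine gfac_of_colId (fun i => ?_)
        rw [hΘa, Matrix.updateCol_ne hju, Matrix.one_apply]; rfl
      · refine gfac_of_pair (Ne.symm hju) (fun i => ?_)
        rw [hΘa, Matrix.updateCol_self]
        rfl
    have hprodB : ∏ c ∈ ({j, u} : Finset (Fin d)), gfac (1 : Matrix (Fin d) (Fin d) ℤ) c
        = (1 + X j) * (1 + X u) := by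
      rw [Finset.prod_pair hju]
      congr 1 <;> exact gfac_of_colId (fun i => by rw [Matrix.one_apply]; rfl)
    have hcard : ({j, u} : Finset (Fin d)).card = 2 := Finset.card_pair hju
    rw [msum]
    simp only [List.map_cons, List.map_nil, List.sum_cons, List.sum_nil]
    rw [hprodA, hprodB, hcard]
    norm_num
    ring

theorem cert_all (m : ℕ) (hm : 2 ≤ m) : ∀ V : Finset (Fin d), V.card = m →
    ∀ j ∈ V, Cert V j := by
  induction m with
  | zero => omega
  | succ m ih =>
    intro V hV j hj
    rcases eq_or_lt_of_le hm with heq | hlt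
    · -- card V = 2
      have hc2 : V.card = 2 := by omega
      obtain ⟨a, b, hab, rfl⟩ := Finset.card_eq_two.1 hc2
      rcases Finset.mem_insert.1 hj with rfl | hjb
      · exact cert_base hab
      · rw [Finset.mem_singleton] at hjb
        subst hjb
        rw [Finset.pair_comm a j]
        exact cert_base (Ne.symm hab)
    · have hm2 : 2 ≤ m := by omega
      -- pick t and u
      have hcer : (V.erase j).card = m := by rw [Finset.card_erase_of_mem hj, hV]; omega
      have hne1 : (V.erase j).Nonempty := Finset.card_pos.1 (by omega)
      obtain ⟨t, ht⟩ := hne1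
      have htj : t ≠ j := (Finset.mem_erase.1 ht).1
      have htV : t ∈ V := (Finset.mem_erase.1 ht).2
      have hne2 : ((V.erase j).erase t).Nonempty := by
        apply Finset.card_pos.1
        rw [Finset.card_erase_of_mem ht, hcer]
        omega
      obtain ⟨u, hu⟩ := hne2
      have hut : u ≠ t := (Finset.mem_erase.1 hu).1
      have huj : u ≠ j := (Finset.mem_erase.1 (Finset.mem_erase.1 hu).2).1
      have huV : u ∈ V := (Finset.mem_erase.1 (Finset.mem_erase.1 hu).2).2
      set Vv := V.erase t with hVv
      set W := V.erase u with hW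
      have hVvcard : Vv.card = m := by rw [hVv, Finset.card_erase_of_mem htV, hV]; omega
      have hWcard : W.card = m := by rw [hW, Finset.card_erase_of_mem huV, hV]; omega
      have hjVv : j ∈ Vv := Finset.mem_erase.2 ⟨Ne.symm htj, hj⟩
      have hjW : j ∈ W := Finset.mem_erase.2 ⟨Ne.symm huj, hj⟩
      have htW : t ∈ W := Finset.mem_erase.2 ⟨Ne.symm hut, htV⟩
      have htVv : t ∉ Vv := Finset.notMem_erase t V
      have huW : u ∉ W := Finset.notMem_erase u V
      have hVins_t : V = insert t Vv := (Finset.insert_erase htV).symm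
      have hVins_u : V = insert u W := (Finset.insert_erase huV).symm
      obtain ⟨LV, hLV, hSV⟩ := ih hm2 Vv hVvcard j hjVv
      obtain ⟨LW, hLW, hSW⟩ := ih hm2 W hWcard j hjW
      classical
      set f : ℝ × Matrix (Fin d) (Fin d) ℤ → ℝ × Matrix (Fin d) (Fin d) ℤ :=
        fun x => (-x.1, x.2.updateCol u (colId u + colId t)) with hf
      refine ⟨LV ++ (LW ++ LW.map f), ?_, ?_⟩
      · intro x hx
        rcases List.mem_append.1 hx with hx | hx
        · rw [hVins_t]; exact goodOn_insert (hLV x hx)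
        · rcases List.mem_append.1 hx with hx | hx
          · rw [hVins_u]; exact goodOn_insert (hLW x hx)
          · obtain ⟨y, hy, rfl⟩ := List.mem_map.1 hx
            rw [hVins_u]
            exact goodOn_update (hLW y hy) huW htW
      · have hA : msum V LV = (1 + X t) * msum Vv LV := msum_grow hVins_t htVv LV hLV
        have hB : msum V LW = (1 + X u) * msum W LW := msum_grow hVins_u huW LW hLW
        have hC : msum V (LW.map f) = (-(X u + X t)) * msum W LW := by
          refine msum_map_mul f (-(X u + X t)) LW (fun x hx => ?_)
          have hprod : ∏ c ∈ V, gfac (f x).2 c = (X u + X t) * ∏ c ∈ W, gfac x.2 c := by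
            rw [hVins_u, Finset.prod_insert huW]
            congr 1
            · exact gfac_of_pair hut (fun i => by
                rw [hf]; exact Matrix.updateCol_self)
            · refine Finset.prod_congr rfl (fun c hc => gfac_congr (fun i => ?_))
              rw [hf]
              exact Matrix.updateCol_ne (fun hh => huW (hh ▸ hc))
          rw [hprod, hf]
          simp only [map_neg]
          ring
        rw [msum_append, msum_append, hA, hB, hC, hSV, hSW, hV]
        have hexp : (2:ℝ) ^ (m + 1 - 2) = 2 * 2 ^ (m - 2) := by
          have h2 : m + 1 - 2 = (m - 2) + 1 := by omega
          rw [h2, pow_succ]; ring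
        rw [hVvcard, hWcard, hexp, map_mul]
        have h2C : (C (2:ℝ) : MvPolynomial (Fin d) ℝ) = 2 := by
          simp [map_ofNat]
        rw [h2C]
        ring

def cubeGens (n : ℕ) : Set (MvPolynomial (Fin n) ℝ) := {q | ∃ i : Fin n, q = X i ^ 2 - 1}

lemma cube_vanish_mem : ∀ (n : ℕ) (p : MvPolynomial (Fin n) ℝ),
    (∀ ε : Fin n → ℝ, (∀ i, ε i = -1 ∨ ε i = 1) → eval ε p = 0) →
    p ∈ Ideal.span (cubeGens n) := by
  intro n
  induction n with
  | zero =>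
    intro p hp
    obtain ⟨r, rfl⟩ := MvPolynomial.C_surjective (Fin 0) p
    have h0 := hp (fun _ => 1) (fun i => i.elim0)
    rw [eval_C] at h0
    rw [h0, map_zero]
    exact Ideal.zero_mem _
  | succ n ih =>
    intro p hp
    set e := MvPolynomial.finSuccEquiv ℝ n with he
    set P : Polynomial (MvPolynomial (Fin n) ℝ) := e p with hP
    set q : Polynomial (MvPolynomial (Fin n) ℝ) :=
      Polynomial.X ^ 2 - Polynomial.C 1 with hq
    have hmon : q.Monic := Polynomial.monic_X_pow_sub_C 1 (by norm_num)
    set R := P %ₘ q with hR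
    set Q := P /ₘ q with hQ
    have hdiv : q * Q + R = P := by
      rw [hR, hQ, add_comm]
      exact Polynomial.modByMonic_add_div P q
    have hdeg : R.degree ≤ 1 := by
      have h2 : R.degree < q.degree := Polynomial.degree_modByMonic_lt P hmon
      rw [hq, Polynomial.degree_X_pow_sub_C (by norm_num) 1] at h2
      exact Order.le_of_lt_succ (by exact_mod_cast h2)
    set r1 := R.coeff 1 with hr1
    set r0 := R.coeff 0 with hr0
    have hRform : R = Polynomial.C r1 * Polynomial.X + Polynomial.C r0 :=
      Polynomial.eq_X_add_C_of_degree_le_one hdeg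
    -- evaluation identity
    have heval : ∀ (y : ℝ) (ε : Fin n → ℝ),
        eval (Fin.cons y ε) p = (y ^ 2 - 1) *
          Polynomial.eval y (Polynomial.map (eval ε) Q) + eval ε r1 * y + eval ε r0 := by
      intro y ε
      rw [eval_eq_eval_mv_eval', ← he, ← hP, ← hdiv, hRform, hq]
      simp only [Polynomial.map_add, Polynomial.map_mul, Polynomial.map_sub,
        Polynomial.map_pow, Polynomial.map_one, Polynomial.map_X, Polynomial.map_C,
        Polynomial.eval_add, Polynomial.eval_mul, Polynomial.eval_sub, Polynomial.eval_pow,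
        Polynomial.eval_one, Polynomial.eval_X, Polynomial.eval_C, map_one]
      ring
    have hvan : ∀ ε : Fin n → ℝ, (∀ i, ε i = -1 ∨ ε i = 1) →
        eval ε r0 = 0 ∧ eval ε r1 = 0 := by
      intro ε hε
      have hc1 : ∀ i : Fin (n+1), (Fin.cons (1:ℝ) ε : Fin (n+1) → ℝ) i = -1 ∨ (Fin.cons (1:ℝ) ε : Fin (n+1) → ℝ) i = 1 := by
        intro i
        by_cases hi : i = 0
        · right; rw [hi]; simp
        · obtain ⟨k, rfl⟩ := Fin.eq_succ_of_ne_zero hi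
          simpa [Fin.cons_succ] using hε k
      have hcm1 : ∀ i : Fin (n+1), (Fin.cons (-1:ℝ) ε : Fin (n+1) → ℝ) i = -1 ∨ (Fin.cons (-1:ℝ) ε : Fin (n+1) → ℝ) i = 1 := by
        intro i
        by_cases hi : i = 0
        · left; rw [hi]; simp
        · obtain ⟨k, rfl⟩ := Fin.eq_succ_of_ne_zero hi
          simpa [Fin.cons_succ] using hε k
      have h1 := hp (Fin.cons 1 ε) hc1
      have h2 := hp (Fin.cons (-1) ε) hcm1
      rw [heval 1 ε] at h1
      rw [heval (-1) ε] at h2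
      norm_num at h1 h2
      constructor <;> linarith
    have hr0mem := ih r0 (fun ε hε => (hvan ε hε).1)
    have hr1mem := ih r1 (fun ε hε => (hvan ε hε).2)
    -- reconstruct p
    have hpform : p = (X 0 ^ 2 - 1) * e.symm Q +
        e.symm (Polynomial.C r1) * X 0 + e.symm (Polynomial.C r0) := by
      have hq' : e.symm q = X 0 ^ 2 - 1 := by
        have : e (X 0 ^ 2 - 1 : MvPolynomial (Fin (n+1)) ℝ) = q := by
          rw [map_sub, map_pow, map_one, hq]
          rw [MvPolynomial.finSuccEquiv_X_zero]
          rw [Polynomial.C_1]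
        rw [← this, AlgEquiv.symm_apply_apply]
      have hx' : e.symm Polynomial.X = X 0 := by
        rw [← MvPolynomial.finSuccEquiv_X_zero (R := ℝ) (n := n), AlgEquiv.symm_apply_apply]
      calc p = e.symm P := by rw [hP, AlgEquiv.symm_apply_apply]
        _ = e.symm (q * Q + (Polynomial.C r1 * Polynomial.X + Polynomial.C r0)) := by
              rw [← hRform, hdiv]
        _ = e.symm q * e.symm Q + (e.symm (Polynomial.C r1) * e.symm Polynomial.X
              + e.symm (Polynomial.C r0)) := by rw [map_add, map_add, map_mul, map_mul]
        _ = _ := by rw [hq', hx']; ring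
    -- membership transfers
    have hCmem : ∀ r : MvPolynomial (Fin n) ℝ, r ∈ Ideal.span (cubeGens n) →
        e.symm (Polynomial.C r) ∈ Ideal.span (cubeGens (n+1)) := by
      intro r hr
      refine Submodule.span_induction
        (p := fun x _ => e.symm (Polynomial.C x) ∈ Ideal.span (cubeGens (n+1)))
        ?_ ?_ ?_ ?_ hr
      · rintro x ⟨i, rfl⟩
        have : e.symm (Polynomial.C (X i ^ 2 - 1 : MvPolynomial (Fin n) ℝ))
            = X i.succ ^ 2 - 1 := by
          have h1 : e (X i.succ ^ 2 - 1 : MvPolynomial (Fin (n+1)) ℝ)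
              = Polynomial.C (X i ^ 2 - 1) := by
            rw [map_sub, map_pow, map_one, MvPolynomial.finSuccEquiv_X_succ,
              map_sub, map_pow, map_one]
          rw [← h1, AlgEquiv.symm_apply_apply]
        rw [this]
        exact Ideal.subset_span ⟨i.succ, rfl⟩
      · simp only [map_zero]
        exact Ideal.zero_mem _
      · intro x y _ _ hx hy
        rw [map_add, map_add]
        exact Ideal.add_mem _ hx hy
      · intro a x _ hx
        rw [smul_eq_mul, map_mul, map_mul]
        exact Ideal.mul_mem_left _ _ hx
    rw [hpform]
    refine Ideal.add_mem _ (Ideal.add_mem _ ?_ ?_) (hCmem r0 hr0mem)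
    · exact Ideal.mul_mem_right _ _ (Ideal.subset_span ⟨0, rfl⟩)
    · exact Ideal.mul_mem_right _ _ (hCmem r1 hr1mem)

lemma prod_gfac_one : (∏ c : Fin d, gfac (1 : Matrix (Fin d) (Fin d) ℤ) c)
    = ∏ c : Fin d, (1 + X c) :=
  Finset.prod_congr rfl (fun c _ => gfac_of_colId (fun i => by rw [Matrix.one_apply]; rfl))

lemma one_mem_Sfin : (1 : Matrix (Fin d) (Fin d) ℤ) ∈ Sfin d :=
  mem_Sfin.2 (goodOn_one (∅ : Finset (Fin d))).1

lemma rep_msum {L : List (ℝ × Matrix (Fin d) (Fin d) ℤ)} (h : ∀ x ∈ L, goodPred x.2) :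
    Rep d (msum Finset.univ L) := by
  induction L with
  | nil => simpa [msum] using (rep_zero (d := d))
  | cons a L ih =>
    have hrep1 : Rep d (C a.1 * ∏ c : Fin d, gfac a.2 c) :=
      rep_mul _ (rep_prod_gen (mem_Sfin.2 (h a (List.mem_cons_self))))
    have hrep2 := ih (fun x hx => h x (List.mem_cons_of_mem a hx))
    simpa [msum, List.map_cons, List.sum_cons] using rep_add hrep1 hrep2

lemma rep_sq_sub_one (hd : 1 ≤ d) (j : Fin d) : Rep d (X j ^ 2 - 1) := by
  rcases eq_or_lt_of_le hd with h1 | h2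
  · have hd1 : d = 1 := h1.symm
    subst hd1
    have hj : j = 0 := Subsingleton.elim j 0
    have h := rep_mul (X (0 : Fin 1) - 1) (rep_prod_gen one_mem_Sfin)
    have heq : (X (0 : Fin 1) - 1) * ∏ c : Fin 1, gfac (1 : Matrix (Fin 1) (Fin 1) ℤ) c
        = X j ^ 2 - 1 := by
      rw [prod_gfac_one, hj]
      rw [Fin.prod_univ_one]
      ring
    rwa [heq] at h
  · obtain ⟨L, hG, hS⟩ := cert_all (d := d) d h2 Finset.univ (by simp) j (Finset.mem_univ j)
    rw [show (Finset.univ : Finset (Fin d)).card = d by simp] at hS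
    have hrep := rep_mul (C (((2:ℝ) ^ (d - 2))⁻¹)) (rep_msum (fun x hx => (hG x hx).1))
    have hne : ((2:ℝ) ^ (d - 2)) ≠ 0 := pow_ne_zero _ two_ne_zero
    have heq : C (((2:ℝ) ^ (d - 2))⁻¹) * msum Finset.univ L = X j ^ 2 - 1 := by
      rw [hS, ← mul_assoc, ← map_mul, inv_mul_cancel₀ hne, map_one, one_mul]
    rwa [heq] at hrep

lemma qtilde_eval_one {Θ : Matrix (Fin d) (Fin d) ℤ} (h : Θ ∈ Sfin d) :
    eval (fun _ => (1:ℝ)) (qtilde Θ) = 1 := by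
  obtain ⟨h01, hsum, -⟩ := mem_Sfin.1 h
  rw [qtilde, eval_prod]
  refine Finset.prod_eq_one (fun c _ => ?_)
  rw [map_mul, eval_C, map_add, apply_ite (eval (fun _ => (1:ℝ))), map_one, map_zero, map_sum]
  simp only [map_mul, eval_C, eval_X, mul_one]
  have hcast : (∑ i, ((Θ i c : ℤ) : ℝ)) = ((∑ i, Θ i c : ℤ) : ℝ) := by push_cast; rfl
  rw [hcast]
  rcases hsum c with hs1 | hs2
  · rw [hs1, if_pos rfl]; norm_num
  · rw [hs2, if_neg (by norm_num)]; norm_num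

end Stmt9


/-- Theorem Ã (algebraic form): if `a(1,…,1) = 2^d` and `a(ε) = 0` for all
`ε ∈ Z' = {−1,1}^d \ {(1,…,1)}`, then `a = Σ_Θ c_Θ · 2^d · q̃_Θ` with
`Σ_Θ c_Θ(1,…,1) = 1`, the (finite) index set consisting of all `d×d` integer matrices `Θ`
whose columns are 0-1 vectors with exactly one or two ones and with `det Θ = ±1`. -/
theorem stmt_9 (d : ℕ) (hd : 1 ≤ d) (a : MvPolynomial (Fin d) ℝ)
    (h1 : eval (fun _ => (1 : ℝ)) a = 2 ^ d)
    (h0 : ∀ ε : Fin d → ℝ, (∀ i, ε i = -1 ∨ ε i = 1) → ε ≠ (fun _ => 1) →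
      eval ε a = 0) :
    ∃ (S : Finset (Matrix (Fin d) (Fin d) ℤ))
      (c : Matrix (Fin d) (Fin d) ℤ → MvPolynomial (Fin d) ℝ),
      (∀ Θ, Θ ∈ S ↔
        ((∀ i j, Θ i j = 0 ∨ Θ i j = 1) ∧
         (∀ j, (∑ i, Θ i j) = 1 ∨ (∑ i, Θ i j) = 2) ∧
         (Θ.det = 1 ∨ Θ.det = -1))) ∧
      a = ∑ Θ ∈ S, c Θ * (2 : MvPolynomial (Fin d) ℝ) ^ d * qtilde Θ ∧
      (∑ Θ ∈ S, eval (fun _ => (1 : ℝ)) (c Θ)) = 1 := by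
  classical
  set pI := ∏ c : Fin d, Stmt9.gfac (1 : Matrix (Fin d) (Fin d) ℤ) c with hpIdef
  have hpI : Stmt9.Rep d pI := Stmt9.rep_prod_gen Stmt9.one_mem_Sfin
  have hpIval : pI = ∏ c : Fin d, (1 + X c) := Stmt9.prod_gfac_one
  have hvan : ∀ ε : Fin d → ℝ, (∀ i, ε i = -1 ∨ ε i = 1) → eval ε (a - pI) = 0 := by
    intro ε hε
    rw [map_sub]
    by_cases h : ε = fun _ => 1
    · subst h
      rw [h1, hpIval, eval_prod]
      have : ∀ c ∈ (Finset.univ : Finset (Fin d)),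
          eval (fun _ => (1:ℝ)) (1 + X c) = 2 := by
        intro c _; simp; norm_num
      rw [Finset.prod_congr rfl this, Finset.prod_const]
      simp
    · rw [h0 ε hε h, hpIval, eval_prod]
      have hex : ∃ i, ε i = -1 := by
        by_contra hno
        push_neg at hno
        exact h (funext fun i => (hε i).resolve_left (hno i))
      obtain ⟨i, hi⟩ := hex
      rw [Finset.prod_eq_zero (Finset.mem_univ i) (by simp [hi])]
      simp
  have hmem := Stmt9.cube_vanish_mem d (a - pI) hvan
  have hrepb : Stmt9.Rep d (a - pI) := by
    refine Submodule.span_induction (p := fun x _ => Stmt9.Rep d x) ?_ ?_ ?_ ?_ hmem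
    · rintro x ⟨i, rfl⟩
      exact Stmt9.rep_sq_sub_one hd i
    · exact Stmt9.rep_zero
    · intro x y _ _ hx hy; exact Stmt9.rep_add hx hy
    · intro g x _ hx; rw [smul_eq_mul]; exact Stmt9.rep_mul g hx
  have hrepa : Stmt9.Rep d a := by
    have h := Stmt9.rep_add hrepb hpI
    rwa [sub_add_cancel] at h
  obtain ⟨c, hc⟩ := hrepa
  refine ⟨Stmt9.Sfin d, c, fun Θ => Stmt9.mem_Sfin, hc, ?_⟩
  have hev := congrArg (eval (fun _ => (1:ℝ))) hc
  rw [h1, map_sum] at hev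
  have hterm : ∀ Θ ∈ Stmt9.Sfin d,
      eval (fun _ => (1:ℝ)) (c Θ * (2 : MvPolynomial (Fin d) ℝ) ^ d * qtilde Θ)
        = eval (fun _ => (1:ℝ)) (c Θ) * 2 ^ d := by
    intro Θ hΘ
    rw [map_mul, map_mul, Stmt9.qtilde_eval_one hΘ, mul_one, map_pow]
    norm_num
  rw [Finset.sum_congr rfl hterm, ← Finset.sum_mul] at hev
  have h2 : ((2:ℝ) ^ d) ≠ 0 := pow_ne_zero _ two_ne_zero
  have : (∑ Θ ∈ Stmt9.Sfin d, eval (fun _ => (1:ℝ)) (c Θ)) * 2 ^ d = 1 * 2 ^ d := by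
    rw [one_mul, ← hev]
  exact mul_right_cancel₀ h2 this
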